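/- For a periodized discrete Gaussian kernel h on ℤ/Nℤ, h_j ∝ Σ_{k∈ℤ} exp(−(j+kN)²/(2σ²)) normalized to sum to 1, all DFT coefficients are real and strictly positive; hence the circulant convolution operator with kernel h is symmetric positive definite and in particular invertible. -/

import Mathlib

open Real Complex

noncomputable section

/-- Discrete Fourier transform of `x : ℝ^N` (indices mod `N`). -/
def dft {N : ℕ} [NeZero N] (x : ZMod N → ℝ) (m : ZMod N) : ℂ :=
  ∑ j : ZMod N, (x j : ℂ) * Complex.exp (-2 * π * Complex.I * (j.val * m.val) / N)

/-- Discrete circular convolution with kernel `h`. -/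
def circConv {N : ℕ} [NeZero N] (h x : ZMod N → ℝ) (j : ZMod N) : ℝ :=
  ∑ k : ZMod N, h (j - k) * x k

/-- The unnormalized periodized (wrapped) discrete Gaussian on `ℤ/Nℤ`. -/
def wrappedGauss (N : ℕ) [NeZero N] (σ : ℝ) (j : ZMod N) : ℝ :=
  ∑' k : ℤ, Real.exp (-((j.val : ℝ) + k * N) ^ 2 / (2 * σ ^ 2))

/-- The periodized discrete Gaussian kernel, normalized to sum to `1`. -/
def gaussKernel (N : ℕ) [NeZero N] (σ : ℝ) (j : ZMod N) : ℝ :=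
  wrappedGauss N σ j / ∑ i : ZMod N, wrappedGauss N σ i

set_option linter.unusedSectionVars false
namespace GaussAux

open Finset

variable {N : ℕ} [NeZero N]

/-- The basic root-of-unity exponential `e^{2πit/N}`. -/
def eps (N : ℕ) (t : ℤ) : ℂ := Complex.exp (2 * π * Complex.I * t / N)

lemma eps_add (s t : ℤ) : eps N (s + t) = eps N s * eps N t := by
  rw [eps, eps, eps, ← Complex.exp_add]; congr 1; push_cast; ring

lemma eps_natmul (d : ℤ) (n : ℕ) : eps N (d * n) = eps N d ^ n := by
  rw [eps, eps, ← Complex.exp_nat_mul]; congr 1; push_cast; ring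

lemma eps_conj (t : ℤ) : (starRingEnd ℂ) (eps N t) = eps N (-t) := by
  rw [eps, eps, ← Complex.exp_conj]
  congr 1
  simp only [map_div₀, map_mul, Complex.conj_I, Complex.conj_ofNat,
    Complex.conj_ofReal, map_intCast, map_natCast]
  push_cast
  ring

lemma eps_dvd (d : ℤ) (hd : (N : ℤ) ∣ d) : eps N d = 1 := by
  obtain ⟨q, rfl⟩ := hd
  have hN : (N : ℂ) ≠ 0 := Nat.cast_ne_zero.mpr (NeZero.ne N)
  rw [eps, show (2 * (π:ℂ) * Complex.I * (((N:ℤ) * q : ℤ) : ℂ) / N) = q * (2 * π * Complex.I) by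
    push_cast; field_simp]
  exact Complex.exp_int_mul_two_pi_mul_I q

lemma eps_ne_one (d : ℤ) (hd : ¬ (N : ℤ) ∣ d) : eps N d ≠ 1 := by
  intro h
  rw [eps, Complex.exp_eq_one_iff] at h
  obtain ⟨q, hq⟩ := h
  apply hd
  have hN : (N : ℂ) ≠ 0 := Nat.cast_ne_zero.mpr (NeZero.ne N)
  have h2 : (2 * (π:ℂ) * Complex.I) ≠ 0 := by
    simp [Real.pi_ne_zero, Complex.I_ne_zero, Complex.ofReal_ne_zero]
  have hd' : (d : ℂ) = (q : ℂ) * N := by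
    apply mul_left_cancel₀ h2
    field_simp at hq
    linear_combination (2 * (π:ℂ) * Complex.I) * hq
  have hd'' : d = q * N := by exact_mod_cast hd'
  exact ⟨q, by rw [hd'', mul_comm]⟩

lemma ortho (d : ℤ) :
    ∑ m : ZMod N, eps N (d * m.val) = if (d : ZMod N) = 0 then (N : ℂ) else 0 := by
  have hval : ∀ m : ZMod N, eps N (d * m.val) = eps N d ^ m.val := fun m => eps_natmul d m.val
  have hsum : ∑ m : ZMod N, eps N d ^ m.val = ∑ i ∈ range N, eps N d ^ i := by
    refine Finset.sum_nbij' (fun m => m.val) (fun i => (i : ZMod N)) ?_ ?_ ?_ ?_ ?_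
    · intro m _; exact Finset.mem_range.mpr (ZMod.val_lt m)
    · intro i _; exact Finset.mem_univ _
    · intro m _; exact (ZMod.natCast_rightInverse m)
    · intro i hi; exact ZMod.val_cast_of_lt (Finset.mem_range.mp hi)
    · intro m _; rfl
  simp_rw [hval]
  rw [hsum]
  by_cases hd : (d : ZMod N) = 0
  · rw [if_pos hd, eps_dvd d ((ZMod.intCast_zmod_eq_zero_iff_dvd d N).mp hd)]
    simp
  · rw [if_neg hd]
    have h1 : eps N d ≠ 1 := eps_ne_one d (fun hdvd => hd ((ZMod.intCast_zmod_eq_zero_iff_dvd d N).mpr hdvd))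
    rw [geom_sum_eq h1]
    have hpow : eps N d ^ N = 1 := by
      rw [← eps_natmul d N]
      exact eps_dvd _ ⟨d, mul_comm d N⟩
    simp [hpow]



lemma summable_gauss (r : ℝ) {d : ℝ} (hd : 0 < d) :
    Summable fun k : ℤ => Real.exp (-π * ((k : ℝ) + r) ^ 2 * d) := by
  have h := HurwitzKernelBounds.summable_f_int 0 r hd
  refine h.congr fun k => ?_
  simp [HurwitzKernelBounds.f_int]

lemma summable_wg {σ : ℝ} (hσ : 0 < σ) (r : ℝ) :
    Summable fun k : ℤ => Real.exp (-(r + (k : ℝ) * N) ^ 2 / (2 * σ ^ 2)) := by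
  have hN : (0 : ℝ) < N := Nat.cast_pos.mpr (Nat.pos_of_ne_zero (NeZero.ne N))
  have hd : 0 < (N : ℝ) ^ 2 / (2 * π * σ ^ 2) := by positivity
  refine (summable_gauss (r / N) hd).congr fun k => ?_
  congr 1
  field_simp
  ring

/-- Any integer representative gives the same wrapped Gaussian. -/
lemma wrappedGauss_rep (σ : ℝ) (z : ℤ) (j : ZMod N) (hz : (z : ZMod N) = j) :
    wrappedGauss N σ j = ∑' k : ℤ, Real.exp (-((z : ℝ) + (k : ℝ) * N) ^ 2 / (2 * σ ^ 2)) := by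
  have hq : ((j.val : ℤ)) = z % N := by
    rw [← hz, ZMod.val_intCast]
  have hed := Int.emod_add_mul_ediv z (N : ℤ)
  set q := z / (N : ℤ) with hqdef
  have hzz : (j.val : ℤ) + q * (N : ℤ) = z := by rw [hq, hqdef, mul_comm]; exact hed
  have hzr : (z : ℝ) = (j.val : ℝ) + (q : ℝ) * N := by exact_mod_cast hzz.symm
  calc wrappedGauss N σ j
      = ∑' k : ℤ, Real.exp (-((j.val : ℝ) + ((k + q : ℤ) : ℝ) * N) ^ 2 / (2 * σ ^ 2)) :=
        ((Equiv.addRight q).tsum_eq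
          (fun k : ℤ => Real.exp (-((j.val : ℝ) + (k : ℝ) * N) ^ 2 / (2 * σ ^ 2)))).symm
    _ = ∑' k : ℤ, Real.exp (-((z : ℝ) + (k : ℝ) * N) ^ 2 / (2 * σ ^ 2)) := by
        refine tsum_congr fun k => ?_
        rw [hzr]
        push_cast
        ring_nf

lemma wrappedGauss_pos {σ : ℝ} (hσ : 0 < σ) (j : ZMod N) : 0 < wrappedGauss N σ j := by
  have hs := summable_wg (N := N) hσ (j.val : ℝ)
  exact Summable.tsum_pos hs (fun k => (Real.exp_pos _).le) 0 (Real.exp_pos _)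

lemma wrappedGauss_neg (σ : ℝ) (j : ZMod N) : wrappedGauss N σ (-j) = wrappedGauss N σ j := by
  have hcast : ((-(j.val : ℤ) : ℤ) : ZMod N) = -j := by
    push_cast
    simp [ZMod.natCast_val, ZMod.cast_id]
  rw [wrappedGauss_rep σ (-(j.val : ℤ)) (-j) hcast]
  calc ∑' k : ℤ, Real.exp (-(((-(j.val : ℤ) : ℤ) : ℝ) + (k : ℝ) * N) ^ 2 / (2 * σ ^ 2))
      = ∑' k : ℤ, Real.exp (-((j.val : ℝ) + (((-k : ℤ) : ℝ)) * N) ^ 2 / (2 * σ ^ 2)) := by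
        refine tsum_congr fun k => ?_
        push_cast
        ring_nf
    _ = wrappedGauss N σ j := by
        rw [wrappedGauss]
        exact (Equiv.neg ℤ).tsum_eq (fun k : ℤ => Real.exp (-((j.val : ℝ) + (k : ℝ) * N) ^ 2 / (2 * σ ^ 2)))

lemma sum_wrappedGauss_pos {σ : ℝ} (hσ : 0 < σ) :
    0 < ∑ i : ZMod N, wrappedGauss N σ i :=
  Finset.sum_pos (fun i _ => wrappedGauss_pos hσ i) Finset.univ_nonempty

/-- The reindexing equivalence `ZMod N × ℤ ≃ ℤ`. -/
def zEquiv (N : ℕ) [NeZero N] : ZMod N × ℤ ≃ ℤ where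
  toFun p := (p.1.val : ℤ) + p.2 * N
  invFun n := ((n : ZMod N), n / (N : ℤ))
  left_inv p := by
    obtain ⟨j, k⟩ := p
    have hN : (0 : ℤ) < N := Int.natCast_pos.mpr (Nat.pos_of_ne_zero (NeZero.ne N))
    have hvlt : (j.val : ℤ) < N := Int.ofNat_lt.mpr (ZMod.val_lt j)
    have h1 : (((j.val : ℤ) + k * N : ℤ) : ZMod N) = j := by
      push_cast
      simp [ZMod.natCast_val, ZMod.cast_id]
    have h2 : ((j.val : ℤ) + k * N) / N = k := by
      rw [Int.add_mul_ediv_right _ _ (by omega : (N:ℤ) ≠ 0),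
        Int.ediv_eq_zero_of_lt (Int.natCast_nonneg _) hvlt, zero_add]
    exact Prod.ext h1 h2
  right_inv n := by
    show ((n : ZMod N).val : ℤ) + n / (N : ℤ) * N = n
    rw [ZMod.val_intCast, mul_comm]
    exact Int.emod_add_mul_ediv n (N : ℤ)


set_option maxHeartbeats 1000000 in
lemma dft_wrapped {σ : ℝ} (hσ : 0 < σ) (m : ZMod N) :
    dft (wrappedGauss N σ) m =
      ((((2 * π * σ ^ 2) ^ ((1:ℝ)/2) *
        ∑' n : ℤ, Real.exp (-π * ((n : ℝ) + (m.val : ℝ) / N) ^ 2 * (2 * π * σ ^ 2)) : ℝ)) : ℂ) := by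
  have hN : (0 : ℝ) < N := Nat.cast_pos.mpr (Nat.pos_of_ne_zero (NeZero.ne N))
  have hNc : (N : ℂ) ≠ 0 := Nat.cast_ne_zero.mpr (NeZero.ne N)
  have hπc : (π : ℂ) ≠ 0 := Complex.ofReal_ne_zero.mpr Real.pi_ne_zero
  have hσc : (σ : ℂ) ≠ 0 := Complex.ofReal_ne_zero.mpr hσ.ne'
  set A : ℝ := 2 * π * σ ^ 2 with hA
  have hApos : 0 < A := by rw [hA]; positivity
  have hAc : (A : ℂ) ≠ 0 := Complex.ofReal_ne_zero.mpr hApos.ne'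
  set t : ℝ := (m.val : ℝ) / N with ht
  set a : ℂ := ((A⁻¹ : ℝ) : ℂ) with ha
  set b : ℂ := -Complex.I * (t : ℂ) with hb
  set F : ℤ → ℂ := fun n => Complex.exp (-π * a * (n : ℂ) ^ 2 + 2 * π * b * (n : ℂ)) with hF
  have hare : 0 < a.re := by rw [ha, Complex.ofReal_re]; positivity
  have hsumF : Summable F := by
    have hτ : 0 < (Complex.I * a).im := by
      rw [ha]
      simp only [Complex.mul_im, Complex.I_re, Complex.I_im, Complex.ofReal_re,
        Complex.ofReal_im, zero_mul, one_mul, mul_zero, zero_add, add_zero]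
      positivity
    have h := (summable_jacobiTheta₂_term_iff (-(t : ℂ)) (Complex.I * a)).mpr hτ
    refine h.congr fun n => ?_
    rw [jacobiTheta₂_term, hF, hb]
    congr 1
    push_cast
    linear_combination (↑π * a * (n : ℂ) ^ 2) * Complex.I_mul_I
  have key : ∀ j : ZMod N,
      (wrappedGauss N σ j : ℂ) * Complex.exp (-2 * π * Complex.I * (j.val * m.val) / N)
        = ∑' k : ℤ, F ((zEquiv N) (j, k)) := by
    intro j
    rw [show (wrappedGauss N σ j : ℂ)
        = ∑' k : ℤ, ((Real.exp (-((j.val : ℝ) + k * N) ^ 2 / (2 * σ ^ 2)) : ℝ) : ℂ) from by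
      rw [wrappedGauss, Complex.ofReal_tsum]]
    rw [← tsum_mul_right]
    refine tsum_congr fun k => ?_
    show _ = F ((j.val : ℤ) + k * N)
    rw [hF]
    dsimp only
    rw [show (-↑π * a * (((j.val : ℤ) + k * N : ℤ) : ℂ) ^ 2 + 2 * ↑π * b * (((j.val : ℤ) + k * N : ℤ) : ℂ))
        = ((-((j.val : ℝ) + k * N) ^ 2 / (2 * σ ^ 2) : ℝ) : ℂ)
          + (-2 * ↑π * Complex.I * ((j.val : ℕ) * (m.val : ℕ) : ℂ) / N
            + ((-(m.val * k : ℤ)) : ℂ) * (2 * ↑π * Complex.I)) from by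
      rw [ha, hb, ht, hA]
      push_cast
      field_simp
      ring]
    rw [show ((-(m.val * k : ℤ)) : ℂ) = (((-(m.val * k : ℤ)) : ℤ) : ℂ) by push_cast; ring]
    rw [Complex.exp_add, Complex.exp_add, Complex.exp_int_mul_two_pi_mul_I, mul_one,
      Complex.ofReal_exp]
  have hsumFe : Summable (fun p : ZMod N × ℤ => F ((zEquiv N) p)) :=
    (zEquiv N).summable_iff.mpr hsumF
  have step1 : dft (wrappedGauss N σ) m = ∑' n : ℤ, F n := by
    calc dft (wrappedGauss N σ) m
        = ∑ j : ZMod N, ∑' k : ℤ, F ((zEquiv N) (j, k)) := by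
          rw [dft]; exact Finset.sum_congr rfl fun j _ => key j
      _ = ∑' j : ZMod N, ∑' k : ℤ, F ((zEquiv N) (j, k)) := (tsum_fintype _).symm
      _ = ∑' p : ZMod N × ℤ, F ((zEquiv N) p) :=
          (Summable.tsum_prod' hsumFe fun j => hsumFe.prod_factor j).symm
      _ = ∑' n : ℤ, F n := (zEquiv N).tsum_eq F
  have step2 : ∑' n : ℤ, F n
      = 1 / a ^ (1/2 : ℂ) * ∑' n : ℤ, Complex.exp (-π / a * ((n : ℂ) + Complex.I * b) ^ 2) :=
    Complex.tsum_exp_neg_quadratic hare b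
  have h1 : (1 : ℂ) / a ^ (1/2 : ℂ) = ((A ^ ((1:ℝ)/2) : ℝ) : ℂ) := by
    rw [ha, show (1/2 : ℂ) = (((1:ℝ)/2 : ℝ) : ℂ) by norm_num,
      ← Complex.ofReal_cpow (by positivity : (0:ℝ) ≤ A⁻¹)]
    rw [Real.inv_rpow hApos.le, one_div, ← Complex.ofReal_inv, inv_inv]
  have h2 : ∑' n : ℤ, Complex.exp (-π / a * ((n : ℂ) + Complex.I * b) ^ 2)
      = ((∑' n : ℤ, Real.exp (-π * ((n : ℝ) + t) ^ 2 * A) : ℝ) : ℂ) := by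
    rw [Complex.ofReal_tsum]
    refine tsum_congr fun n => ?_
    rw [Complex.ofReal_exp]
    congr 1
    rw [ha, hb, show Complex.I * (-Complex.I * (t : ℂ)) = (t : ℂ) by
      rw [← mul_assoc, mul_neg, Complex.I_mul_I]; ring]
    push_cast
    field_simp
  rw [step1, step2, h1, h2, ← Complex.ofReal_mul]

lemma dft_wrapped_val_pos {σ : ℝ} (hσ : 0 < σ) (m : ZMod N) :
    0 < (2 * π * σ ^ 2) ^ ((1:ℝ)/2) *
        ∑' n : ℤ, Real.exp (-π * ((n : ℝ) + (m.val : ℝ) / N) ^ 2 * (2 * π * σ ^ 2)) := by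
  have hApos : (0:ℝ) < 2 * π * σ ^ 2 := by positivity
  refine mul_pos (Real.rpow_pos_of_pos hApos _) ?_
  exact Summable.tsum_pos (summable_gauss _ hApos) (fun k => (Real.exp_pos _).le) 0 (Real.exp_pos _)


lemma dft_gaussKernel_eq (σ : ℝ) (m : ZMod N) :
    dft (gaussKernel N σ) m
      = ((∑ i : ZMod N, wrappedGauss N σ i)⁻¹ : ℝ) * dft (wrappedGauss N σ) m := by
  rw [dft, dft, Finset.mul_sum]
  refine Finset.sum_congr rfl fun j _ => ?_
  rw [gaussKernel]
  push_cast
  ring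

lemma dft_gaussKernel_real {σ : ℝ} (hσ : 0 < σ) (m : ZMod N) :
    ∃ r : ℝ, 0 < r ∧ dft (gaussKernel N σ) m = (r : ℂ) := by
  refine ⟨(∑ i : ZMod N, wrappedGauss N σ i)⁻¹ *
    ((2 * π * σ ^ 2) ^ ((1:ℝ)/2) *
      ∑' n : ℤ, Real.exp (-π * ((n : ℝ) + (m.val : ℝ) / N) ^ 2 * (2 * π * σ ^ 2))), ?_, ?_⟩
  · exact mul_pos (inv_pos.mpr (sum_wrappedGauss_pos hσ)) (dft_wrapped_val_pos hσ m)
  · rw [dft_gaussKernel_eq, dft_wrapped hσ, ← Complex.ofReal_mul]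

lemma gaussKernel_symm (σ : ℝ) (j k : ZMod N) :
    gaussKernel N σ (j - k) = gaussKernel N σ (k - j) := by
  rw [gaussKernel, gaussKernel, show k - j = -(j - k) by ring, wrappedGauss_neg]

lemma dft_eps (h : ZMod N → ℝ) (m : ZMod N) :
    dft h m = ∑ j : ZMod N, (h j : ℂ) * eps N (-((j.val : ℤ) * m.val)) := by
  rw [dft]
  refine Finset.sum_congr rfl fun j _ => ?_
  rw [eps]
  congr 1
  push_cast
  ring

lemma cond_iff (j k l : ZMod N) :
    ((((j.val : ℤ) - k.val - l.val : ℤ)) : ZMod N) = 0 ↔ l = j - k := by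
  rw [show ((((j.val : ℤ) - k.val - l.val : ℤ)) : ZMod N) = j - k - l by
    push_cast
    simp [ZMod.natCast_val, ZMod.cast_id],
    sub_eq_zero]
  exact eq_comm

lemma inv_dft (h : ZMod N → ℝ) (j k : ZMod N) :
    ∑ m : ZMod N, dft h m * eps N (((j.val : ℤ) - k.val) * m.val)
      = (N : ℂ) * (h (j - k) : ℂ) := by
  calc ∑ m : ZMod N, dft h m * eps N (((j.val:ℤ) - k.val) * m.val)
      = ∑ m : ZMod N, ∑ l : ZMod N,
          (h l : ℂ) * eps N ((((j.val:ℤ) - k.val) - l.val) * m.val) := by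
        refine Finset.sum_congr rfl fun m _ => ?_
        rw [dft_eps, Finset.sum_mul]
        refine Finset.sum_congr rfl fun l _ => ?_
        rw [mul_assoc, ← eps_add]
        congr 2
        ring
    _ = ∑ l : ZMod N, (h l : ℂ) *
          ∑ m : ZMod N, eps N ((((j.val:ℤ) - k.val) - l.val) * m.val) := by
        rw [Finset.sum_comm]
        exact Finset.sum_congr rfl fun l _ => (Finset.mul_sum _ _ _).symm
    _ = ∑ l : ZMod N, (if l = j - k then (h l : ℂ) * N else 0) := by
        refine Finset.sum_congr rfl fun l _ => ?_
        rw [ortho, if_congr (cond_iff j k l) rfl rfl, mul_ite, mul_zero]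
    _ = (N : ℂ) * (h (j - k) : ℂ) := by
        rw [Finset.sum_ite_eq' Finset.univ (j - k) (fun l => (h l : ℂ) * N)]
        simp [mul_comm]

lemma cond_iff' (j k : ZMod N) :
    ((((j.val : ℤ) - k.val : ℤ)) : ZMod N) = 0 ↔ j = k := by
  rw [show ((((j.val : ℤ) - k.val : ℤ)) : ZMod N) = j - k by
    push_cast
    simp [ZMod.natCast_val, ZMod.cast_id],
    sub_eq_zero]

lemma dft_vanish (x : ZMod N → ℝ)
    (hx : ∀ m : ZMod N, ∑ j : ZMod N, (x j : ℂ) * eps N ((j.val : ℤ) * m.val) = 0) :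
    x = 0 := by
  have hNc : (N : ℂ) ≠ 0 := Nat.cast_ne_zero.mpr (NeZero.ne N)
  funext k
  have h1 : ∑ m : ZMod N,
      (∑ j : ZMod N, (x j : ℂ) * eps N ((j.val:ℤ) * m.val)) * eps N (-((k.val:ℤ) * m.val))
      = (N : ℂ) * (x k : ℂ) := by
    calc ∑ m : ZMod N,
        (∑ j : ZMod N, (x j : ℂ) * eps N ((j.val:ℤ) * m.val)) * eps N (-((k.val:ℤ) * m.val))
        = ∑ m : ZMod N, ∑ j : ZMod N,
            (x j : ℂ) * eps N (((j.val:ℤ) - k.val) * m.val) := by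
          refine Finset.sum_congr rfl fun m _ => ?_
          rw [Finset.sum_mul]
          refine Finset.sum_congr rfl fun j _ => ?_
          rw [mul_assoc, ← eps_add]
          congr 2
          ring
      _ = ∑ j : ZMod N, (x j : ℂ) *
            ∑ m : ZMod N, eps N (((j.val:ℤ) - k.val) * m.val) := by
          rw [Finset.sum_comm]
          exact Finset.sum_congr rfl fun j _ => (Finset.mul_sum _ _ _).symm
      _ = ∑ j : ZMod N, (if j = k then (x j : ℂ) * N else 0) := by
          refine Finset.sum_congr rfl fun j _ => ?_
          rw [ortho, if_congr (cond_iff' j k) rfl rfl, mul_ite, mul_zero]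
      _ = (N : ℂ) * (x k : ℂ) := by
          rw [Finset.sum_ite_eq' Finset.univ k (fun j => (x j : ℂ) * N)]
          simp [mul_comm]
  rw [show (∑ m : ZMod N,
      (∑ j : ZMod N, (x j : ℂ) * eps N ((j.val:ℤ) * m.val)) * eps N (-((k.val:ℤ) * m.val))) = 0 from by
    refine Finset.sum_eq_zero fun m _ => ?_
    rw [hx m, zero_mul]] at h1
  have : (x k : ℂ) = 0 := (mul_eq_zero.mp h1.symm).resolve_left hNc
  have : x k = 0 := by exact_mod_cast this
  simp [this]

lemma quad_eq (σ : ℝ) (x : ZMod N → ℝ) :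
    ∑ m : ZMod N, dft (gaussKernel N σ) m *
        ((Complex.normSq (∑ j : ZMod N, (x j : ℂ) * eps N ((j.val:ℤ) * m.val)) : ℝ) : ℂ)
      = (N : ℂ) * ((∑ j : ZMod N, x j * circConv (gaussKernel N σ) x j : ℝ) : ℂ) := by
  set h := gaussKernel N σ with hh
  set v : ZMod N → ℂ := fun m => ∑ j : ZMod N, (x j : ℂ) * eps N ((j.val:ℤ) * m.val) with hv
  have hconj : ∀ m : ZMod N,
      (starRingEnd ℂ) (v m) = ∑ k : ZMod N, (x k : ℂ) * eps N (-((k.val:ℤ) * m.val)) := by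
    intro m
    rw [hv]
    dsimp only
    rw [map_sum]
    refine Finset.sum_congr rfl fun k _ => ?_
    rw [map_mul, Complex.conj_ofReal, eps_conj]
  calc ∑ m : ZMod N, dft h m * ((Complex.normSq (v m) : ℝ) : ℂ)
      = ∑ m : ZMod N, dft h m * (v m * (starRingEnd ℂ) (v m)) := by
        refine Finset.sum_congr rfl fun m _ => ?_
        rw [Complex.mul_conj]
    _ = ∑ m : ZMod N, ∑ j : ZMod N, ∑ k : ZMod N,
          (x j : ℂ) * (x k : ℂ) * (dft h m * eps N (((j.val:ℤ) - k.val) * m.val)) := by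
        refine Finset.sum_congr rfl fun m _ => ?_
        rw [hconj, hv]
        dsimp only
        rw [Finset.sum_mul_sum, Finset.mul_sum]
        refine Finset.sum_congr rfl fun j _ => ?_
        rw [Finset.mul_sum]
        refine Finset.sum_congr rfl fun k _ => ?_
        rw [show (((j.val:ℤ) - k.val) * m.val) = (j.val:ℤ) * m.val + -((k.val:ℤ) * m.val) by ring,
          eps_add]
        ring
    _ = ∑ j : ZMod N, ∑ k : ZMod N,
          (x j : ℂ) * (x k : ℂ) * ((N : ℂ) * (h (j - k) : ℂ)) := by
        rw [Finset.sum_comm]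
        refine Finset.sum_congr rfl fun j _ => ?_
        rw [Finset.sum_comm]
        refine Finset.sum_congr rfl fun k _ => ?_
        rw [← Finset.mul_sum, inv_dft]
    _ = (N : ℂ) * ((∑ j : ZMod N, x j * circConv h x j : ℝ) : ℂ) := by
        push_cast [circConv]
        rw [Finset.mul_sum]
        refine Finset.sum_congr rfl fun j _ => ?_
        rw [Finset.mul_sum, Finset.mul_sum]
        refine Finset.sum_congr rfl fun k _ => ?_
        ring

end GaussAux

/-- **Positivity of the DFT of the periodized Gaussian.** All DFT coefficients of the
periodized discrete Gaussian kernel are real and strictly positive; hence the circulant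
convolution operator with this kernel is symmetric positive definite, and in particular
invertible. -/
theorem gaussKernel_dft_pos (N : ℕ) [NeZero N] (σ : ℝ) (hσ : 0 < σ) :
    (∀ m : ZMod N, (dft (gaussKernel N σ) m).im = 0 ∧ 0 < (dft (gaussKernel N σ) m).re) ∧
    (∀ x y : ZMod N → ℝ,
        (∑ j, x j * circConv (gaussKernel N σ) y j)
          = ∑ j, y j * circConv (gaussKernel N σ) x j) ∧
    (∀ x : ZMod N → ℝ, x ≠ 0 → 0 < ∑ j, x j * circConv (gaussKernel N σ) x j) ∧
    Function.Bijective (fun x : ZMod N → ℝ => circConv (gaussKernel N σ) x) := by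
  classical
  have hNpos : (0:ℝ) < N := Nat.cast_pos.mpr (Nat.pos_of_ne_zero (NeZero.ne N))
  obtain ⟨r, hrpos, hreq⟩ : ∃ r : ZMod N → ℝ,
      (∀ m, 0 < r m) ∧ ∀ m, dft (gaussKernel N σ) m = (r m : ℂ) := by
    choose r h1 h2 using fun m => GaussAux.dft_gaussKernel_real (N := N) hσ m
    exact ⟨r, h1, h2⟩
  have hsymm : ∀ x y : ZMod N → ℝ,
      (∑ j, x j * circConv (gaussKernel N σ) y j)
        = ∑ j, y j * circConv (gaussKernel N σ) x j := by
    intro x y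
    simp only [circConv, Finset.mul_sum]
    rw [Finset.sum_comm]
    refine Finset.sum_congr rfl fun k _ => Finset.sum_congr rfl fun j _ => ?_
    rw [GaussAux.gaussKernel_symm σ j k]
    ring
  have hpos : ∀ x : ZMod N → ℝ, x ≠ 0 →
      0 < ∑ j, x j * circConv (gaussKernel N σ) x j := by
    intro x hx
    have hquad := GaussAux.quad_eq (N := N) σ x
    have hC : (N:ℝ) * (∑ j, x j * circConv (gaussKernel N σ) x j)
        = ∑ m : ZMod N, r m *
            Complex.normSq (∑ j : ZMod N, (x j : ℂ) * GaussAux.eps N ((j.val:ℤ) * m.val)) := by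
      have h1 : (((N:ℝ) * (∑ j, x j * circConv (gaussKernel N σ) x j) : ℝ) : ℂ)
          = ((∑ m : ZMod N, r m *
              Complex.normSq (∑ j : ZMod N, (x j : ℂ) * GaussAux.eps N ((j.val:ℤ) * m.val)) : ℝ) : ℂ) := by
        calc (((N:ℝ) * (∑ j, x j * circConv (gaussKernel N σ) x j) : ℝ) : ℂ)
            = (N : ℂ) * ((∑ j, x j * circConv (gaussKernel N σ) x j : ℝ) : ℂ) := by push_cast; ring
          _ = ∑ m : ZMod N, dft (gaussKernel N σ) m *
                ((Complex.normSq (∑ j : ZMod N, (x j : ℂ) * GaussAux.eps N ((j.val:ℤ) * m.val)) : ℝ) : ℂ) :=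
              hquad.symm
          _ = _ := by
              push_cast
              exact Finset.sum_congr rfl fun m _ => by rw [hreq m]
      exact_mod_cast h1
    have hex : ∃ m : ZMod N,
        (∑ j : ZMod N, (x j : ℂ) * GaussAux.eps N ((j.val:ℤ) * m.val)) ≠ 0 := by
      by_contra hall
      push_neg at hall
      exact hx (GaussAux.dft_vanish x hall)
    obtain ⟨m₀, hm₀⟩ := hex
    have hsum_pos : 0 < ∑ m : ZMod N, r m *
        Complex.normSq (∑ j : ZMod N, (x j : ℂ) * GaussAux.eps N ((j.val:ℤ) * m.val)) :=
      Finset.sum_pos' (fun m _ => mul_nonneg (hrpos m).le (Complex.normSq_nonneg _))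
        ⟨m₀, Finset.mem_univ _, mul_pos (hrpos m₀) (Complex.normSq_pos.mpr hm₀)⟩
    have hNQ : 0 < (N:ℝ) * (∑ j, x j * circConv (gaussKernel N σ) x j) := by
      rw [hC]; exact hsum_pos
    exact lt_of_mul_lt_mul_left (by simpa using hNQ) hNpos.le
  refine ⟨?_, hsymm, hpos, ?_⟩
  · intro m
    rw [hreq m]
    exact ⟨Complex.ofReal_im _, by rw [Complex.ofReal_re]; exact hrpos m⟩
  · let L : (ZMod N → ℝ) →ₗ[ℝ] (ZMod N → ℝ) :=
      { toFun := fun x => circConv (gaussKernel N σ) x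
        map_add' := by
          intro x y
          funext j
          simp only [circConv, Pi.add_apply, mul_add]
          rw [Finset.sum_add_distrib]
        map_smul' := by
          intro c x
          funext j
          simp only [circConv, Pi.smul_apply, smul_eq_mul, RingHom.id_apply]
          rw [Finset.mul_sum]
          exact Finset.sum_congr rfl fun k _ => by ring }
    have hinj : Function.Injective L := by
      rw [← LinearMap.ker_eq_bot, LinearMap.ker_eq_bot']
      intro x hx0
      by_contra hxne
      have hp := hpos x hxne
      have hz : circConv (gaussKernel N σ) x = 0 := hx0
      rw [hz] at hp
      simp at hp
    have hsurj : Function.Surjective L := LinearMap.injective_iff_surjective.mp hinj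
    exact ⟨hinj, hsurj⟩

end
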